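/- Let μ ∈ ℂ and let M₁, M₂, M₃ ∈ SL(2,ℂ) each have trace 2, with M∞·M₃·M₂·M₁ = 1 where M∞ = diag(e^{2πiμ}, e^{−2πiμ}), and suppose tr(M₁M₂) ≠ 2. Then there exist complex numbers x₁, x₂, x₃ with x₁ ≠ 0 and an invertible P ∈ GL(2,ℂ) such that P⁻¹M₁P = M₁(x), P⁻¹M₂P = M₂(x), P⁻¹M₃P = M₃(x) in the canonical form; moreover tr(M₁M₂) = 2 − x₁², tr(M₃M₂) = 2 − x₂², tr(M₁M₃) = 2 − x₃², and x₁² + x₂² + x₃² − x₁x₂x₃ = 4 sin²(πμ). -/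

import Mathlib

open Matrix

private lemma key_canonical (μ : ℂ) (M₁ M₂ M₃ : Matrix (Fin 2) (Fin 2) ℂ)
    (hd1 : M₁ 0 0 * M₁ 1 1 - M₁ 0 1 * M₁ 1 0 = 1)
    (hd3 : M₃.det = 1)
    (ht1 : M₁ 0 0 + M₁ 1 1 = 2)
    (ht2 : M₂ 0 0 + M₂ 1 1 = 2)
    (ht3 : M₃.trace = 2)
    (hprod : M₃ * M₂ * M₁ =
        !![Complex.exp (-(2 * (Real.pi : ℂ) * Complex.I * μ)), 0; 0,
           Complex.exp (2 * (Real.pi : ℂ) * Complex.I * μ)])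
    (x₁ u0 u1 : ℂ) (hx1 : x₁ ≠ 0)
    (hx1sq : x₁ ^ 2 = 2 - (M₁ * M₂).trace)
    (hker0 : M₂ 0 0 * u0 + M₂ 0 1 * u1 = u0)
    (hker1 : M₂ 1 0 * u0 + M₂ 1 1 * u1 = u1)
    (hD : ((M₁ 0 0 - 1) * u0 + M₁ 0 1 * u1) * u1
        - (M₁ 1 0 * u0 + (M₁ 1 1 - 1) * u1) * u0 ≠ 0) :
    ∃ (x₂ x₃ : ℂ) (P : Matrix (Fin 2) (Fin 2) ℂ), IsUnit P ∧
      P⁻¹ * M₁ * P = !![1, -x₁; 0, 1] ∧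
      P⁻¹ * M₂ * P = !![1, 0; x₁, 1] ∧
      P⁻¹ * M₃ * P = !![1 + x₂ * x₃ / x₁, -(x₂ ^ 2) / x₁;
                        x₃ ^ 2 / x₁, 1 - x₂ * x₃ / x₁] ∧
      (M₃ * M₂).trace = 2 - x₂ ^ 2 ∧
      (M₁ * M₃).trace = 2 - x₃ ^ 2 ∧
      x₁ ^ 2 + x₂ ^ 2 + x₃ ^ 2 - x₁ * x₂ * x₃ =
        4 * Complex.sin ((Real.pi : ℂ) * μ) ^ 2 := by
  have hτ : (M₁ * M₂).trace =
      M₁ 0 0 * M₂ 0 0 + M₁ 0 1 * M₂ 1 0 + (M₁ 1 0 * M₂ 0 1 + M₁ 1 1 * M₂ 1 1) := by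
    simp [Matrix.trace_fin_two, Matrix.mul_apply, Fin.sum_univ_two]
  rw [hτ] at hx1sq
  set v0 : ℂ := (M₁ 0 0 - 1) * u0 + M₁ 0 1 * u1 with hv0
  set v1 : ℂ := M₁ 1 0 * u0 + (M₁ 1 1 - 1) * u1 with hv1
  set P : Matrix (Fin 2) (Fin 2) ℂ := !![v0, -x₁ * u0; v1, -x₁ * u1] with hP
  have hdetP : P.det = -x₁ * (v0 * u1 - v1 * u0) := by
    simp [hP, Matrix.det_fin_two]; ring
  have hPd : IsUnit P.det := by
    rw [hdetP]
    exact (mul_ne_zero (neg_ne_zero.mpr hx1) hD).isUnit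
  have hPunit : IsUnit P := P.isUnit_iff_isUnit_det.mpr hPd
  have hPinv : P⁻¹ * P = 1 := Matrix.nonsing_inv_mul P hPd
  have hPP : P * P⁻¹ = 1 := Matrix.mul_nonsing_inv P hPd
  have hcan : ∀ A : Matrix (Fin 2) (Fin 2) ℂ, P⁻¹ * (P * A) = A := by
    intro A; rw [← Matrix.mul_assoc, hPinv, one_mul]
  have hcan2 : ∀ A : Matrix (Fin 2) (Fin 2) ℂ, P * (P⁻¹ * A) = A := by
    intro A; rw [← Matrix.mul_assoc, hPP, one_mul]
  set U : Matrix (Fin 2) (Fin 2) ℂ := !![1, -x₁; 0, 1] with hU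
  set L : Matrix (Fin 2) (Fin 2) ℂ := !![1, 0; x₁, 1] with hL
  have hM1P : M₁ * P = P * U := by
    ext i j
    fin_cases i <;> fin_cases j <;>
      simp [hP, hU, hv0, hv1, Matrix.mul_apply, Fin.sum_univ_two]
    · linear_combination (M₁ 0 0 * u0 + M₁ 0 1 * u1) * ht1 - u0 * hd1
    · ring
    · linear_combination (M₁ 1 0 * u0 + M₁ 1 1 * u1) * ht1 - u1 * hd1
    · ring
  have hM2P : M₂ * P = P * L := by
    ext i j
    fin_cases i <;> fin_cases j <;>
      simp [hP, hL, hv0, hv1, Matrix.mul_apply, Fin.sum_univ_two]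
    · linear_combination u0 * hx1sq + (M₂ 0 1 * u1 - M₂ 1 1 * u0) * ht1 +
        (M₁ 0 1 * u1 - (2 - M₁ 0 0) * u0) * ht2 - (M₁ 0 0 - 1) * hker0 - M₁ 0 1 * hker1
    · linear_combination (-x₁) * hker0
    · linear_combination u1 * hx1sq + (M₂ 1 0 * u0 - M₂ 0 0 * u1) * ht1 +
        (M₁ 1 0 * u0 - (2 - M₁ 1 1) * u1) * ht2 - (M₁ 1 1 - 1) * hker1 - M₁ 1 0 * hker0
    · linear_combination (-x₁) * hker1
  set T : Matrix (Fin 2) (Fin 2) ℂ := P⁻¹ * M₃ * P with hT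
  have hM1eq : M₁ = P * U * P⁻¹ := by
    rw [← hM1P, Matrix.mul_assoc, hPP, Matrix.mul_one]
  have hM2eq : M₂ = P * L * P⁻¹ := by
    rw [← hM2P, Matrix.mul_assoc, hPP, Matrix.mul_one]
  have hM3eq : M₃ = P * T * P⁻¹ := by
    rw [hT, Matrix.mul_assoc, Matrix.mul_assoc, hPP, Matrix.mul_one, ← Matrix.mul_assoc,
      hPP, one_mul]
  have htrT : T 0 0 + T 1 1 = 2 := by
    have h : T.trace = M₃.trace := by
      rw [hT, Matrix.trace_mul_comm (P⁻¹ * M₃) P, ← Matrix.mul_assoc, hPP, one_mul]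
    rw [Matrix.trace_fin_two] at h
    rw [h, ht3]
  have hdetT : T 0 0 * T 1 1 - T 0 1 * T 1 0 = 1 := by
    have h : T.det = 1 := by
      rw [hT, Matrix.det_mul, Matrix.det_mul]
      have h2 : P⁻¹.det * P.det = 1 := by
        have := congrArg Matrix.det hPinv
        rwa [Matrix.det_mul, Matrix.det_one] at this
      calc P⁻¹.det * M₃.det * P.det = M₃.det * (P⁻¹.det * P.det) := by ring
        _ = 1 := by rw [h2, hd3, mul_one]
    rwa [Matrix.det_fin_two] at h
  have ha2 : (T 0 0 - 1) ^ 2 = -(T 0 1 * T 1 0) := by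
    linear_combination T 0 0 * htrT - hdetT
  -- choose x₂ x₃
  obtain ⟨x₂, x₃, hx2sq, hx23, hx3sq⟩ :
      ∃ x₂ x₃ : ℂ, x₂ ^ 2 = -(T 0 1) * x₁ ∧ x₂ * x₃ = (T 0 0 - 1) * x₁ ∧
        x₃ ^ 2 = T 1 0 * x₁ := by
    by_cases hb : T 0 1 = 0
    · have ha : T 0 0 = 1 := by
        have : (T 0 0 - 1) ^ 2 = 0 := by rw [ha2, hb]; ring
        have h1 : T 0 0 - 1 = 0 := pow_eq_zero_iff (two_ne_zero) |>.mp this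
        linear_combination h1
      obtain ⟨x₃, hx3⟩ := IsAlgClosed.exists_pow_nat_eq (k := ℂ) (T 1 0 * x₁) zero_lt_two
      exact ⟨0, x₃, by rw [hb]; ring, by rw [ha]; ring, hx3⟩
    · obtain ⟨x₂, hx2⟩ := IsAlgClosed.exists_pow_nat_eq (k := ℂ) (-(T 0 1) * x₁) zero_lt_two
      have hx2ne : x₂ ≠ 0 := by
        intro h
        rw [h] at hx2
        exact (mul_ne_zero (neg_ne_zero.mpr hb) hx1) (by linear_combination -hx2)
      refine ⟨x₂, (T 0 0 - 1) * x₁ / x₂, hx2, by field_simp, ?_⟩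
      field_simp
      linear_combination x₁ * ha2 - T 1 0 * hx2
  refine ⟨x₂, x₃, P, hPunit, ?_, ?_, ?_, ?_, ?_, ?_⟩
  · rw [Matrix.mul_assoc, hM1P, ← Matrix.mul_assoc, hPinv, one_mul]
  · rw [Matrix.mul_assoc, hM2P, ← Matrix.mul_assoc, hPinv, one_mul]
  · show T = _
    ext i j
    fin_cases i <;> fin_cases j <;> simp
    · field_simp; linear_combination -hx23
    · field_simp; linear_combination hx2sq
    · field_simp; linear_combination -hx3sq
    · field_simp; linear_combination x₁ * htrT + hx23
  · have h32 : M₃ * M₂ = P * (T * L) * P⁻¹ := by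
      rw [hM3eq, hM2eq]
      simp only [Matrix.mul_assoc, hcan]
    have htr : (M₃ * M₂).trace = (T * L).trace := by
      rw [h32, Matrix.trace_mul_comm (P * (T * L)) P⁻¹, ← Matrix.mul_assoc, hPinv, one_mul]
    rw [htr, Matrix.trace_fin_two]
    simp [Matrix.mul_apply, Fin.sum_univ_two, hL]
    linear_combination htrT + hx2sq
  · have h13 : M₁ * M₃ = P * (U * T) * P⁻¹ := by
      rw [hM3eq, hM1eq]
      simp only [Matrix.mul_assoc, hcan]
    have htr : (M₁ * M₃).trace = (U * T).trace := by
      rw [h13, Matrix.trace_mul_comm (P * (U * T)) P⁻¹, ← Matrix.mul_assoc, hPinv, one_mul]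
    rw [htr, Matrix.trace_fin_two]
    simp [Matrix.mul_apply, Fin.sum_univ_two, hU]
    linear_combination htrT + hx3sq
  · -- final identity
    have hTLU : M₃ * M₂ * M₁ = P * (T * L * U) * P⁻¹ := by
      rw [hM3eq, hM2eq, hM1eq]
      simp only [Matrix.mul_assoc, hcan]
    have htrinf : Complex.exp (-(2 * (Real.pi : ℂ) * Complex.I * μ)) +
        Complex.exp (2 * (Real.pi : ℂ) * Complex.I * μ) =
        T 0 0 + T 0 1 * x₁ - T 1 0 * x₁ + T 1 1 - T 1 1 * x₁ ^ 2 := by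
      have h1 : (M₃ * M₂ * M₁).trace = (T * L * U).trace := by
        rw [hTLU, Matrix.trace_mul_comm (P * (T * L * U)) P⁻¹, ← Matrix.mul_assoc,
          hPinv, one_mul]
      have h2 : (M₃ * M₂ * M₁).trace =
          Complex.exp (-(2 * (Real.pi : ℂ) * Complex.I * μ)) +
          Complex.exp (2 * (Real.pi : ℂ) * Complex.I * μ) := by
        rw [hprod]; simp [Matrix.trace_fin_two]
      rw [← h2, h1, Matrix.trace_fin_two]
      simp [Matrix.mul_apply, Fin.sum_univ_two, hL, hU]
      ring
    have e3 : Complex.exp ((Real.pi : ℂ) * μ * Complex.I) *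
        Complex.exp (-((Real.pi : ℂ) * μ) * Complex.I) = 1 := by
      rw [← Complex.exp_add, show (Real.pi : ℂ) * μ * Complex.I +
        -((Real.pi : ℂ) * μ) * Complex.I = 0 by ring, Complex.exp_zero]
    have hsin : 4 * Complex.sin ((Real.pi : ℂ) * μ) ^ 2 =
        2 - Complex.exp (2 * (Real.pi : ℂ) * Complex.I * μ) -
        Complex.exp (-(2 * (Real.pi : ℂ) * Complex.I * μ)) := by
      rw [Complex.sin]
      have e1 : Complex.exp (2 * (Real.pi : ℂ) * Complex.I * μ) =
          Complex.exp ((Real.pi : ℂ) * μ * Complex.I) *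
          Complex.exp ((Real.pi : ℂ) * μ * Complex.I) := by
        rw [← Complex.exp_add]; congr 1; ring
      have e2 : Complex.exp (-(2 * (Real.pi : ℂ) * Complex.I * μ)) =
          Complex.exp (-((Real.pi : ℂ) * μ) * Complex.I) *
          Complex.exp (-((Real.pi : ℂ) * μ) * Complex.I) := by
        rw [← Complex.exp_add]; congr 1; ring
      rw [e1, e2]
      linear_combination (Complex.exp (-((Real.pi : ℂ) * μ) * Complex.I) -
        Complex.exp ((Real.pi : ℂ) * μ * Complex.I)) ^ 2 * Complex.I_sq + 2 * e3
    linear_combination (-1 : ℂ) * hsin + htrinf + (1 - x₁ ^ 2) * htrT + hx2sq + hx3sq -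
      x₁ * hx23

/-- Canonical form of the triple of unipotent monodromy matrices with
`M∞ M₃ M₂ M₁ = 1`, `M∞ = diag(e^{2πiμ}, e^{-2πiμ})`, when `tr(M₁M₂) ≠ 2`: there are
`x₁ ≠ 0, x₂, x₃` and an invertible `P` conjugating the triple to the canonical form,
with the trace relations and `x₁² + x₂² + x₃² - x₁x₂x₃ = 4 sin²(πμ)`. -/
theorem triple_canonical_form (μ : ℂ) (M₁ M₂ M₃ : Matrix (Fin 2) (Fin 2) ℂ)
    (hd1 : M₁.det = 1) (hd2 : M₂.det = 1) (hd3 : M₃.det = 1)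
    (ht1 : M₁.trace = 2) (ht2 : M₂.trace = 2) (ht3 : M₃.trace = 2)
    (hrel : !![Complex.exp (2 * (Real.pi : ℂ) * Complex.I * μ), 0; 0,
        Complex.exp (-(2 * (Real.pi : ℂ) * Complex.I * μ))] * M₃ * M₂ * M₁ = 1)
    (htr12 : (M₁ * M₂).trace ≠ 2) :
    ∃ (x₁ x₂ x₃ : ℂ) (P : Matrix (Fin 2) (Fin 2) ℂ), x₁ ≠ 0 ∧ IsUnit P ∧
      P⁻¹ * M₁ * P = !![1, -x₁; 0, 1] ∧
      P⁻¹ * M₂ * P = !![1, 0; x₁, 1] ∧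
      P⁻¹ * M₃ * P = !![1 + x₂ * x₃ / x₁, -(x₂ ^ 2) / x₁;
                        x₃ ^ 2 / x₁, 1 - x₂ * x₃ / x₁] ∧
      (M₁ * M₂).trace = 2 - x₁ ^ 2 ∧
      (M₃ * M₂).trace = 2 - x₂ ^ 2 ∧
      (M₁ * M₃).trace = 2 - x₃ ^ 2 ∧
      x₁ ^ 2 + x₂ ^ 2 + x₃ ^ 2 - x₁ * x₂ * x₃ =
        4 * Complex.sin ((Real.pi : ℂ) * μ) ^ 2 := by
  rw [Matrix.det_fin_two] at hd1 hd2
  rw [Matrix.trace_fin_two] at ht1 ht2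
  have hτ : (M₁ * M₂).trace =
      M₁ 0 0 * M₂ 0 0 + M₁ 0 1 * M₂ 1 0 + (M₁ 1 0 * M₂ 0 1 + M₁ 1 1 * M₂ 1 1) := by
    simp [Matrix.trace_fin_two, Matrix.mul_apply, Fin.sum_univ_two]
  -- the product relation
  have hee : Complex.exp (-(2 * (Real.pi : ℂ) * Complex.I * μ)) *
      Complex.exp (2 * (Real.pi : ℂ) * Complex.I * μ) = 1 := by
    rw [← Complex.exp_add]; simp
  have hee' : Complex.exp (2 * (Real.pi : ℂ) * Complex.I * μ) *
      Complex.exp (-(2 * (Real.pi : ℂ) * Complex.I * μ)) = 1 := by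
    rw [mul_comm]; exact hee
  have hDinf : !![Complex.exp (-(2 * (Real.pi : ℂ) * Complex.I * μ)), 0; 0,
        Complex.exp (2 * (Real.pi : ℂ) * Complex.I * μ)] *
      !![Complex.exp (2 * (Real.pi : ℂ) * Complex.I * μ), 0; 0,
        Complex.exp (-(2 * (Real.pi : ℂ) * Complex.I * μ))] = 1 := by
    rw [Matrix.mul_fin_two, Matrix.one_fin_two]
    norm_num [hee, hee']
  have hprod : M₃ * M₂ * M₁ =
      !![Complex.exp (-(2 * (Real.pi : ℂ) * Complex.I * μ)), 0; 0,
         Complex.exp (2 * (Real.pi : ℂ) * Complex.I * μ)] := by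
    calc M₃ * M₂ * M₁ = 1 * (M₃ * M₂ * M₁) := (one_mul _).symm
      _ = !![Complex.exp (-(2 * (Real.pi : ℂ) * Complex.I * μ)), 0; 0,
            Complex.exp (2 * (Real.pi : ℂ) * Complex.I * μ)] *
          (!![Complex.exp (2 * (Real.pi : ℂ) * Complex.I * μ), 0; 0,
            Complex.exp (-(2 * (Real.pi : ℂ) * Complex.I * μ))] * M₃ * M₂ * M₁) := by
          rw [← hDinf]; simp only [Matrix.mul_assoc]
      _ = _ := by rw [hrel, mul_one]
  -- choice of x₁
  obtain ⟨x₁, hx1sq⟩ := IsAlgClosed.exists_pow_nat_eq (k := ℂ)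
    (2 - (M₁ * M₂).trace) zero_lt_two
  have hx1 : x₁ ≠ 0 := by
    intro h
    apply htr12
    rw [h] at hx1sq
    linear_combination hx1sq
  rcases ne_or_eq (M₂ 1 0) 0 with hr | hr
  · -- use the first column of M₂ - 1
    have hker0 : M₂ 0 0 * (M₂ 0 0 - 1) + M₂ 0 1 * M₂ 1 0 = M₂ 0 0 - 1 := by
      linear_combination M₂ 0 0 * ht2 - hd2
    have hker1 : M₂ 1 0 * (M₂ 0 0 - 1) + M₂ 1 1 * M₂ 1 0 = M₂ 1 0 := by
      linear_combination M₂ 1 0 * ht2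
    have hE : ((M₁ 0 0 - 1) * (M₂ 0 0 - 1) + M₁ 0 1 * M₂ 1 0) * M₂ 1 0
        - (M₁ 1 0 * (M₂ 0 0 - 1) + (M₁ 1 1 - 1) * M₂ 1 0) * (M₂ 0 0 - 1)
        = M₂ 1 0 * ((M₁ * M₂).trace - 2) := by
      rw [hτ]
      linear_combination (-(M₂ 1 0) * (M₂ 0 0 - 1 + M₂ 1 1)) * ht1 +
        (-(M₂ 1 0) * (2 - M₁ 0 0) - M₁ 1 0 * M₂ 0 0) * ht2 + M₁ 1 0 * hd2
    have hD : ((M₁ 0 0 - 1) * (M₂ 0 0 - 1) + M₁ 0 1 * M₂ 1 0) * M₂ 1 0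
        - (M₁ 1 0 * (M₂ 0 0 - 1) + (M₁ 1 1 - 1) * M₂ 1 0) * (M₂ 0 0 - 1) ≠ 0 := by
      rw [hE]; exact mul_ne_zero hr (sub_ne_zero.mpr htr12)
    obtain ⟨x₂, x₃, P, hPu, h1, h2, h3, h4, h5, h6⟩ :=
      key_canonical μ M₁ M₂ M₃ hd1 hd3 ht1 ht2 ht3 hprod x₁ (M₂ 0 0 - 1) (M₂ 1 0)
        hx1 hx1sq hker0 hker1 hD
    exact ⟨x₁, x₂, x₃, P, hx1, hPu, h1, h2, h3, by linear_combination hx1sq, h4, h5, h6⟩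
  · rcases ne_or_eq (M₂ 0 1) 0 with hq | hq
    · -- use the second column of M₂ - 1
      have hker0 : M₂ 0 0 * (M₂ 0 1) + M₂ 0 1 * (M₂ 1 1 - 1) = M₂ 0 1 := by
        linear_combination M₂ 0 1 * ht2
      have hker1 : M₂ 1 0 * (M₂ 0 1) + M₂ 1 1 * (M₂ 1 1 - 1) = M₂ 1 1 - 1 := by
        linear_combination M₂ 1 1 * ht2 - hd2
      have hE : ((M₁ 0 0 - 1) * (M₂ 0 1) + M₁ 0 1 * (M₂ 1 1 - 1)) * (M₂ 1 1 - 1)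
          - (M₁ 1 0 * (M₂ 0 1) + (M₁ 1 1 - 1) * (M₂ 1 1 - 1)) * (M₂ 0 1)
          = -(M₂ 0 1) * ((M₁ * M₂).trace - 2) := by
        rw [hτ]
        linear_combination (M₂ 0 1 * (M₂ 1 1 - 1 + M₂ 0 0)) * ht1 +
          (M₂ 0 1 * (2 - M₁ 1 1) + M₁ 0 1 * M₂ 1 1) * ht2 - M₁ 0 1 * hd2
      have hD : ((M₁ 0 0 - 1) * (M₂ 0 1) + M₁ 0 1 * (M₂ 1 1 - 1)) * (M₂ 1 1 - 1)
          - (M₁ 1 0 * (M₂ 0 1) + (M₁ 1 1 - 1) * (M₂ 1 1 - 1)) * (M₂ 0 1) ≠ 0 := by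
        rw [hE]
        exact mul_ne_zero (neg_ne_zero.mpr hq) (sub_ne_zero.mpr htr12)
      obtain ⟨x₂, x₃, P, hPu, h1, h2, h3, h4, h5, h6⟩ :=
        key_canonical μ M₁ M₂ M₃ hd1 hd3 ht1 ht2 ht3 hprod x₁ (M₂ 0 1) (M₂ 1 1 - 1)
          hx1 hx1sq hker0 hker1 hD
      exact ⟨x₁, x₂, x₃, P, hx1, hPu, h1, h2, h3, by linear_combination hx1sq, h4, h5, h6⟩
    · -- degenerate case: M₂ = 1, contradiction with tr(M₁M₂) ≠ 2
      exfalso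
      apply htr12
      have ha : (M₂ 0 0 - 1) ^ 2 = 0 := by
        linear_combination M₂ 0 0 * ht2 - hd2 - M₂ 0 1 * hr
      have ha' : M₂ 0 0 = 1 := by
        have := pow_eq_zero_iff two_ne_zero |>.mp ha
        linear_combination this
      have hd2' : M₂ 1 1 = 1 := by linear_combination ht2 - ha'
      rw [hτ, ha', hq, hr, hd2']
      linear_combination ht1
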